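/- Let V be a real vector space equipped with a hypercomplex structure (I, J) and K := I∘J. For a real alternating 2-form γ on V satisfying γ(IX, IY) = γ(X, Y) and γ(JX, JY) = −γ(X, Y) for all X, Y (a J-anti-invariant real (1,1)-form with respect to I), define Φ(γ)(X, Y) := (i·γ(JX, Y) − γ(KX, Y))/2. Then Φ(γ) is an ℝ-bilinear alternating complex-valued form satisfying Φ(γ)(IX, Y) = i·Φ(γ)(X, Y) and conj(Φ(γ)(JX, JY)) = Φ(γ)(X, Y) for all X, Y, and γ ↦ Φ(γ) is an ℝ-linear bijection from the space of J-anti-invariant real (1,1)-forms with respect to I onto the space of q-real (2,0)-forms (i.e. ℝ-bilinear alternating complex-valued forms φ with φ(IX, Y) = i·φ(X, Y) and conj(φ(JX, JY)) = φ(X, Y) for all X, Y), with inverse given by φ ↦ ((X, Y) ↦ −2·Im φ(JX, Y)). Moreover, Φ(γ)(X, JX) > 0 for all X ≠ 0 if and only if γ(X, IX) > 0 for all X ≠ 0; that is, Φ(γ) is q-positive if and only if γ is positive. -/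
import Mathlib


open ComplexOrder

/-- The map `Φ(γ)(X,Y) := (i·γ(JX,Y) − γ(KX,Y))/2`, with `K := I∘J`. -/
noncomputable def PhiMap {V : Type*} [AddCommGroup V] [Module ℝ V]
    (I J : Module.End ℝ V) (γ : V →ₗ[ℝ] V →ₗ[ℝ] ℝ) (X Y : V) : ℂ :=
  (Complex.I * (γ (J X) Y : ℂ) - (γ ((I * J) X) Y : ℂ)) / 2

lemma phiRe {V : Type*} [AddCommGroup V] [Module ℝ V] (I J : Module.End ℝ V)
    (γ : V →ₗ[ℝ] V →ₗ[ℝ] ℝ) (X Y : V) :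
    (PhiMap I J γ X Y).re = -(γ (I (J X)) Y)/2 := by
  simp [PhiMap, Complex.div_re, Module.End.mul_apply]

lemma phiIm {V : Type*} [AddCommGroup V] [Module ℝ V] (I J : Module.End ℝ V)
    (γ : V →ₗ[ℝ] V →ₗ[ℝ] ℝ) (X Y : V) :
    (PhiMap I J γ X Y).im = (γ (J X) Y)/2 := by
  simp [PhiMap, Complex.div_im]

/-- `Φ` is an ℝ-linear bijection from `J`-anti-invariant real
`(1,1)`-forms (w.r.t. `I`) onto q-real `(2,0)`-forms, with inverse
`φ ↦ ((X,Y) ↦ −2·Im φ(JX,Y))`; moreover `Φ(γ)` is q-positive iff `γ` is positive. -/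
theorem Phi_bijection
    {V : Type*} [AddCommGroup V] [Module ℝ V]
    (I J : Module.End ℝ V)
    (hI : I * I = -1) (hJ : J * J = -1) (hIJ : I * J = -(J * I)) :
    (∀ γ : V →ₗ[ℝ] V →ₗ[ℝ] ℝ,
      (∀ X Y : V, γ X Y = -(γ Y X)) →
      (∀ X Y : V, γ (I X) (I Y) = γ X Y) →
      (∀ X Y : V, γ (J X) (J Y) = -(γ X Y)) →
        ((∀ X Y : V, PhiMap I J γ X Y = -(PhiMap I J γ Y X)) ∧
         (∀ X Y : V, PhiMap I J γ (I X) Y = Complex.I * PhiMap I J γ X Y) ∧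
         (∀ X Y : V, (starRingEnd ℂ) (PhiMap I J γ (J X) (J Y)) = PhiMap I J γ X Y) ∧
         (∀ X Y : V, -2 * (PhiMap I J γ (J X) Y).im = γ X Y) ∧
         ((∀ X : V, X ≠ 0 → 0 < PhiMap I J γ X (J X)) ↔
           (∀ X : V, X ≠ 0 → 0 < γ X (I X))))) ∧
    (∀ γ₁ γ₂ : V →ₗ[ℝ] V →ₗ[ℝ] ℝ, ∀ X Y : V,
      PhiMap I J (γ₁ + γ₂) X Y = PhiMap I J γ₁ X Y + PhiMap I J γ₂ X Y) ∧
    (∀ (c : ℝ) (γ : V →ₗ[ℝ] V →ₗ[ℝ] ℝ), ∀ X Y : V,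
      PhiMap I J (c • γ) X Y = (c : ℂ) * PhiMap I J γ X Y) ∧
    (∀ φ : V →ₗ[ℝ] V →ₗ[ℝ] ℂ,
      (∀ X Y : V, φ X Y = -(φ Y X)) →
      (∀ X Y : V, φ (I X) Y = Complex.I * φ X Y) →
      (∀ X Y : V, (starRingEnd ℂ) (φ (J X) (J Y)) = φ X Y) →
        ∃ γ : V →ₗ[ℝ] V →ₗ[ℝ] ℝ,
          (∀ X Y : V, γ X Y = -(γ Y X)) ∧
          (∀ X Y : V, γ (I X) (I Y) = γ X Y) ∧
          (∀ X Y : V, γ (J X) (J Y) = -(γ X Y)) ∧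
          (∀ X Y : V, γ X Y = -2 * (φ (J X) Y).im) ∧
          (∀ X Y : V, PhiMap I J γ X Y = φ X Y)) := by
  have hII : ∀ X : V, I (I X) = -X := fun X => by
    have := LinearMap.ext_iff.mp hI X; simpa [Module.End.mul_apply] using this
  have hJJ : ∀ X : V, J (J X) = -X := fun X => by
    have := LinearMap.ext_iff.mp hJ X; simpa [Module.End.mul_apply] using this
  have e1 : ∀ X : V, J (I X) = -(I (J X)) := fun X => by
    have := LinearMap.ext_iff.mp hIJ X
    simp only [Module.End.mul_apply, LinearMap.neg_apply] at this
    rw [this, neg_neg]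
  have e2 : ∀ X : V, I (J X) = -(J (I X)) := fun X => by rw [e1, neg_neg]
  refine ⟨?_, ?_, ?_, ?_⟩
  · -- main γ part
    intro γ hA hIi hJa
    -- derived identities
    have h1 : ∀ X Y : V, γ (J X) Y = γ X (J Y) := fun X Y => by
      have h := hJa (J X) Y; rw [hJJ] at h; simp at h; linarith
    have h2 : ∀ X Y : V, γ (I X) Y = -(γ X (I Y)) := fun X Y => by
      have h := hIi X (I Y); rw [hII] at h; simp at h; linarith
    have hK : ∀ X Y : V, γ (I (J X)) Y = γ X (I (J Y)) := fun X Y => by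
      rw [h2, h1, e1]; simp
    refine ⟨?_, ?_, ?_, ?_, ?_⟩
    · intro X Y
      apply Complex.ext
      · simp only [Complex.neg_re, phiRe]
        rw [hK, hA X (I (J Y))]; ring
      · simp only [Complex.neg_im, phiIm]
        rw [h1, hA X (J Y)]; ring
    · intro X Y
      apply Complex.ext
      · simp only [phiRe, Complex.mul_re, Complex.I_re, Complex.I_im, phiIm]
        rw [e1]; simp only [map_neg, LinearMap.neg_apply, hII]
        simp
        try ring
      · simp only [phiIm, Complex.mul_im, Complex.I_re, Complex.I_im, phiRe]
        rw [e1]; simp only [map_neg, LinearMap.neg_apply]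
        simp
      try ring
    · intro X Y
      apply Complex.ext
      · simp only [Complex.conj_re, phiRe, hJJ]
        simp only [map_neg, LinearMap.neg_apply]
        rw [h2, hK]; ring
      · simp only [Complex.conj_im, phiIm, hJJ]
        simp only [map_neg, LinearMap.neg_apply]
        rw [h1]; ring
    · intro X Y
      rw [phiIm, hJJ]; simp
      try ring
    · have hzero : ∀ Z : V, γ Z Z = 0 := fun Z => by have := hA Z Z; linarith
      have hpos : ∀ X : V, PhiMap I J γ X (J X) = ((γ X (I X))/2 : ℝ) := fun X => by
        apply Complex.ext
        · rw [phiRe, e2]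
          simp only [map_neg, LinearMap.neg_apply, neg_neg, Complex.ofReal_re]
          rw [hJa, hA (I X) X]; ring
        · rw [phiIm, hzero]; simp
      constructor
      · intro h X hX
        have := h X hX
        rw [hpos, Complex.zero_lt_real] at this
        linarith
      · intro h X hX
        rw [hpos, Complex.zero_lt_real]
        linarith [h X hX]
  · intro γ₁ γ₂ X Y
    simp only [PhiMap, LinearMap.add_apply]
    push_cast; ring
  · intro c γ X Y
    simp only [PhiMap, LinearMap.smul_apply, smul_eq_mul]
    push_cast; ring
  · intro φ hA hφI hconj
    have pI2 : ∀ X Y : V, φ X (I Y) = Complex.I * φ X Y := fun X Y => by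
      rw [hA, hφI, hA Y X]; ring
    have pII : ∀ X Y : V, φ (I X) (I Y) = -(φ X Y) := fun X Y => by
      rw [hφI, pI2, ← mul_assoc, Complex.I_mul_I]; ring
    have pJc : ∀ X Y : V, φ X (J Y) = -((starRingEnd ℂ) (φ (J X) Y)) := fun X Y => by
      have h := hconj X (J Y); rw [hJJ] at h
      simp only [map_neg, map_neg] at h
      exact h.symm
    refine ⟨LinearMap.mk₂ ℝ (fun X Y => -2 * (φ (J X) Y).im)
      (fun m₁ m₂ n => by simp [map_add]; ring)
      (fun c m n => by simp [map_smul, Complex.real_smul]; ring)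
      (fun m n₁ n₂ => by simp [map_add]; ring)
      (fun c m n => by simp [map_smul, Complex.real_smul]; ring), ?_, ?_, ?_, ?_, ?_⟩
    · intro X Y
      simp only [LinearMap.mk₂_apply]
      have : φ (J Y) X = (starRingEnd ℂ) (φ (J X) Y) := by
        rw [hA (J Y) X, pJc]; simp
      rw [this]; simp
      try ring
    · intro X Y
      simp only [LinearMap.mk₂_apply]
      rw [e1]
      simp only [map_neg, LinearMap.neg_apply, pII]
      simp
    · intro X Y
      simp only [LinearMap.mk₂_apply, hJJ]
      simp only [map_neg, LinearMap.neg_apply, pJc]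
      simp
      try ring
    · intro X Y; simp
    · intro X Y
      apply Complex.ext
      · rw [phiRe]
        simp only [LinearMap.mk₂_apply]
        rw [e1, hJJ]
        simp only [map_neg, LinearMap.neg_apply, neg_neg, hφI]
        simp
        try ring
      · rw [phiIm]
        simp only [hJJ, map_neg, LinearMap.neg_apply, LinearMap.mk₂_apply]
        simp
      try ring
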